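/- arXiv:math/0501209 — 2 statements merged into one kernel-verified Lean document; each statement's English description precedes it below -/
import Mathlib

section
/- Let A be a Noetherian local ring, x an A-regular element, and C_• a complex of finitely generated free A-modules. Then for each i ≥ 1, the length of H_i(C_•) ⊗_A A/xA is at most the length of H_i(C_• ⊗_A A/xA), whenever the latter is finite. -/
open CategoryTheory Pointwise

/-- Length of a module, as the Krull dimension of its lattice of submodules. -/
noncomputable def moduleLength (R M : Type*) [Ring R] [AddCommGroup M] [Module R M] :
    WithBot ℕ∞ := Order.krullDim (Submodule R M)

/-- The complex `C ⊗_A A/xA` obtained by tensoring each degree with `A/xA`. -/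
noncomputable abbrev tensorQuotComplex (A : Type) [CommRing A] (x : A)
    (C : ChainComplex (ModuleCat A) ℕ) : ChainComplex (ModuleCat A) ℕ :=
  ((MonoidalCategory.tensorRight (ModuleCat.of A (A ⧸ Ideal.span {x}))).mapHomologicalComplex
    (ComplexShape.down ℕ)).obj C

lemma moduleLength_eq_of_equiv {A M N : Type*} [CommRing A] [AddCommGroup M] [Module A M]
    [AddCommGroup N] [Module A N] (e : M ≃ₗ[A] N) : moduleLength A M = moduleLength A N :=
  Order.krullDim_eq_of_orderIso (Submodule.orderIsoMapComap e)

lemma moduleLength_le_of_injective {A M N : Type*} [CommRing A] [AddCommGroup M] [Module A M]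
    [AddCommGroup N] [Module A N] (f : M →ₗ[A] N) (hf : Function.Injective f) :
    moduleLength A M ≤ moduleLength A N :=
  Order.krullDim_le_of_strictMono _ (Submodule.map_strictMono_of_injective hf)

lemma isSMulRegular_free {A M : Type*} [CommRing A] [AddCommGroup M] [Module A M]
    [Module.Free A M] {x : A} (hx : IsSMulRegular A x) : IsSMulRegular M x := by
  obtain ⟨⟨ι, b⟩⟩ := ‹Module.Free A M›
  intro m n h
  apply b.repr.injective
  ext j
  refine hx ?_
  have := congrArg (fun v => b.repr v j) h
  simpa [smul_eq_mul] using this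

lemma tmul_one_surj {A M : Type*} [CommRing A] [AddCommGroup M] [Module A M] (I : Ideal A)
    (z : TensorProduct A M (A ⧸ I)) : ∃ m : M, m ⊗ₜ[A] (1 : A ⧸ I) = z := by
  obtain ⟨y, hy⟩ := (TensorProduct.tensorQuotEquivQuotSMul M I).symm.surjective z
  obtain ⟨m, rfl⟩ := Submodule.Quotient.mk_surjective _ y
  exact ⟨m, by simpa [TensorProduct.tensorQuotEquivQuotSMul_symm_mk] using hy⟩

lemma tmul_one_eq_zero_iff {A M : Type*} [CommRing A] [AddCommGroup M] [Module A M] (x : A)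
    (m : M) : (m ⊗ₜ[A] (1 : A ⧸ Ideal.span {x}) : TensorProduct A M (A ⧸ Ideal.span {x})) = 0
      ↔ ∃ n, x • n = m := by
  set I := Ideal.span {x}
  have h1 : (1 : A ⧸ I) = Ideal.Quotient.mk I 1 := rfl
  have he : (TensorProduct.tensorQuotEquivQuotSMul M I) (m ⊗ₜ[A] (1 : A ⧸ I)) =
      Submodule.Quotient.mk m := by
    rw [h1, TensorProduct.tensorQuotEquivQuotSMul_tmul_mk]
    simp
  rw [← (TensorProduct.tensorQuotEquivQuotSMul M I).map_eq_zero_iff] at *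
  rw [he, Submodule.Quotient.mk_eq_zero, Submodule.ideal_span_singleton_smul]
  constructor
  · intro hm
    obtain ⟨n, -, hn⟩ := Set.mem_smul_set.mp (show m ∈ x • ((⊤ : Submodule A M) : Set M) from hm)
    exact ⟨n, hn⟩
  · rintro ⟨n, rfl⟩
    exact Submodule.smul_mem_pointwise_smul n x ⊤ trivial

/-- For a Noetherian local ring `A`, an `A`-regular element `x`, and a chain complex `C_•` of
finitely generated free `A`-modules, for each `i ≥ 1` one has
`ℓ(H_i(C) ⊗ A/xA) ≤ ℓ(H_i(C ⊗ A/xA))` whenever the latter is finite. -/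
theorem length_homology_tensor_le
    (A : Type) [CommRing A] [IsNoetherianRing A] [IsLocalRing A]
    (x : A) (hx : IsSMulRegular A x)
    (C : ChainComplex (ModuleCat A) ℕ)
    (hfree : ∀ i, Module.Free A (C.X i)) (hfin : ∀ i, Module.Finite A (C.X i))
    (i : ℕ) (hi : 1 ≤ i)
    (hlen : moduleLength A ((tensorQuotComplex A x C).homology i) < ⊤) :
    moduleLength A (TensorProduct A (C.homology i) (A ⧸ Ideal.span {x}))
      ≤ moduleLength A ((tensorQuotComplex A x C).homology i) := by
  classical
  set I := Ideal.span {x} with hI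
  set S := C.sc i with hS
  set S' := (tensorQuotComplex A x C).sc i with hS'
  haveI : Module.Free A ((S.X₃ : Type)) := hfree _
  have hreg3 : IsSMulRegular (S.X₃ : Type) x := isSMulRegular_free hx
  -- concrete descriptions of homology
  have e1 : ((C.homology i : Type)) ≃ₗ[A] ((LinearMap.ker S.g.hom ⧸ LinearMap.range S.moduleCatToCycles) : Type) :=
    S.moduleCatHomologyIso.toLinearEquiv
  have e2 : (((tensorQuotComplex A x C).homology i : Type)) ≃ₗ[A]
      ((LinearMap.ker S'.g.hom ⧸ LinearMap.range S'.moduleCatToCycles) : Type) := S'.moduleCatHomologyIso.toLinearEquiv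
  -- the map ψ0 : ker S.g → ker S'.g, k ↦ k ⊗ 1
  have hg : ∀ k : LinearMap.ker S.g.hom, S'.g.hom
      ((k : S.X₂) ⊗ₜ[A] (1 : A ⧸ I)) = 0 := by
    intro k
    have h0 : S'.g.hom ((k : S.X₂) ⊗ₜ[A] (1 : A ⧸ I))
        = (S.g (k : S.X₂)) ⊗ₜ[A] (1 : A ⧸ I) := rfl
    rw [h0, k.2, TensorProduct.zero_tmul]
    rfl
  let ψ0 : LinearMap.ker S.g.hom →ₗ[A] LinearMap.ker S'.g.hom :=
    { toFun := fun k => ⟨(k : S.X₂) ⊗ₜ[A] (1 : A ⧸ I), hg k⟩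
      map_add' := fun a b => Subtype.ext (TensorProduct.add_tmul (a : S.X₂) (b : S.X₂) (1 : A ⧸ I))
      map_smul' := fun a k => Subtype.ext rfl }
  let ψ1 : LinearMap.ker S.g.hom →ₗ[A] ((LinearMap.ker S'.g.hom ⧸ LinearMap.range S'.moduleCatToCycles) : Type) :=
    (LinearMap.range S'.moduleCatToCycles).mkQ ∘ₗ ψ0
  have hB : LinearMap.range S.moduleCatToCycles ≤ LinearMap.ker ψ1 := by
    rintro _ ⟨c, rfl⟩
    rw [LinearMap.mem_ker]
    have h0 : ψ0 (S.moduleCatToCycles c) = S'.moduleCatToCycles (c ⊗ₜ[A] (1 : A ⧸ I)) :=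
      Subtype.ext rfl
    show (LinearMap.range S'.moduleCatToCycles).mkQ (ψ0 (S.moduleCatToCycles c)) = 0
    rw [h0, Submodule.mkQ_apply, Submodule.Quotient.mk_eq_zero]
    exact ⟨_, rfl⟩
  let φ1 : ((LinearMap.ker S.g.hom ⧸ LinearMap.range S.moduleCatToCycles) : Type) →ₗ[A] ((LinearMap.ker S'.g.hom ⧸ LinearMap.range S'.moduleCatToCycles) : Type) :=
    Submodule.liftQ _ ψ1 hB
  -- x annihilates everything in sight on the tensored side
  have hxt : ∀ t : TensorProduct A (S.X₂ : Type) (A ⧸ I), x • t = 0 := by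
    intro t
    induction t using TensorProduct.induction_on with
    | zero => simp
    | tmul m q =>
        obtain ⟨b, rfl⟩ := Ideal.Quotient.mk_surjective q
        rw [TensorProduct.smul_tmul', TensorProduct.smul_tmul]
        have : x • (Ideal.Quotient.mk I b : A ⧸ I) = 0 := by
          have h0 : (Ideal.Quotient.mk I b : A ⧸ I) = Submodule.Quotient.mk b := rfl
          rw [h0, ← Submodule.Quotient.mk_smul, Submodule.Quotient.mk_eq_zero]
          simpa [smul_eq_mul] using Ideal.mul_mem_right b I (Ideal.mem_span_singleton_self x)
        rw [this, TensorProduct.tmul_zero]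
    | add a b ha hb => rw [smul_add, ha, hb, add_zero]
  have hann : ∀ (r : A), r ∈ I → ∀ z : ((LinearMap.ker S'.g.hom ⧸ LinearMap.range S'.moduleCatToCycles) : Type), r • z = 0 := by
    intro r hr z
    obtain ⟨w, rfl⟩ := Submodule.Quotient.mk_surjective _ z
    obtain ⟨a, rfl⟩ := Ideal.mem_span_singleton'.mp hr
    have hw : (a * x) • w = 0 := by
      apply Subtype.ext
      show (a * x) • (w : S'.X₂) = (0 : S'.X₂)
      rw [mul_smul]
      rw [show ((x • (w : S'.X₂)) = 0) from hxt _, smul_zero]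
    rw [← Submodule.Quotient.mk_smul, hw, Submodule.Quotient.mk_zero]
  have hIker : (I • ⊤ : Submodule A ((LinearMap.ker S.g.hom ⧸ LinearMap.range S.moduleCatToCycles) : Type)) ≤ LinearMap.ker φ1 := by
    refine Submodule.smul_le.2 ?_
    intro r hr h _
    rw [LinearMap.mem_ker, map_smul]
    exact hann r hr _
  let φ : (((LinearMap.ker S.g.hom ⧸ LinearMap.range S.moduleCatToCycles) : Type) ⧸ (I • ⊤ : Submodule A ((LinearMap.ker S.g.hom ⧸ LinearMap.range S.moduleCatToCycles) : Type)))
      →ₗ[A] ((LinearMap.ker S'.g.hom ⧸ LinearMap.range S'.moduleCatToCycles) : Type) := Submodule.liftQ _ φ1 hIker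
  have hker : LinearMap.ker φ1 ≤ (I • ⊤ : Submodule A ((LinearMap.ker S.g.hom ⧸ LinearMap.range S.moduleCatToCycles) : Type)) := by
    intro h hh
    obtain ⟨k, rfl⟩ := Submodule.Quotient.mk_surjective _ h
    rw [LinearMap.mem_ker] at hh
    have h1 : ψ1 k = 0 := hh
    have h2 : ψ0 k ∈ LinearMap.range S'.moduleCatToCycles := by
      rwa [show ψ1 k = (LinearMap.range S'.moduleCatToCycles).mkQ (ψ0 k) from rfl,
        Submodule.mkQ_apply, Submodule.Quotient.mk_eq_zero] at h1
    obtain ⟨t, ht⟩ := h2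
    obtain ⟨c, rfl⟩ := tmul_one_surj I t
    have ht1 : (S.f c) ⊗ₜ[A] (1 : A ⧸ I) = ((k : S.X₂) : S.X₂) ⊗ₜ[A] (1 : A ⧸ I) :=
      congrArg Subtype.val ht
    have h3 : (((k : S.X₂) - S.f c)) ⊗ₜ[A] (1 : A ⧸ I)
        = (0 : TensorProduct A (S.X₂ : Type) (A ⧸ I)) := by
      rw [TensorProduct.sub_tmul, ht1, sub_self]
    obtain ⟨n, hn⟩ := (tmul_one_eq_zero_iff x _).1 h3
    have hgn : S.g n = 0 := by
      apply hreg3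
      show x • S.g n = x • 0
      rw [smul_zero, ← map_smul, hn, map_sub, k.2,
        show S.g (S.f c) = 0 from (S.moduleCatToCycles c).2, sub_zero]
    have hk : k = S.moduleCatToCycles c + x • (⟨n, hgn⟩ : LinearMap.ker S.g.hom) := by
      apply Subtype.ext
      show (k : S.X₂) = S.f c + x • n
      rw [hn]
      abel
    rw [hk, Submodule.Quotient.mk_add, Submodule.Quotient.mk_smul]
    rw [show (Submodule.Quotient.mk (S.moduleCatToCycles c) :
        ((LinearMap.ker S.g.hom ⧸ LinearMap.range S.moduleCatToCycles) : Type)) = 0 from (Submodule.Quotient.mk_eq_zero _).2 ⟨_, rfl⟩]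
    rw [zero_add]
    exact Submodule.smul_mem_smul (Ideal.mem_span_singleton_self x) trivial
  have hφ : Function.Injective φ :=
    LinearMap.ker_eq_bot.mp (Submodule.ker_liftQ_eq_bot _ _ _ hker)
  calc moduleLength A (TensorProduct A (C.homology i) (A ⧸ I))
      = moduleLength A (TensorProduct A ((LinearMap.ker S.g.hom ⧸ LinearMap.range S.moduleCatToCycles) : Type) (A ⧸ I)) :=
        moduleLength_eq_of_equiv (TensorProduct.congr e1 (LinearEquiv.refl A (A ⧸ I)))
    _ = moduleLength A (((LinearMap.ker S.g.hom ⧸ LinearMap.range S.moduleCatToCycles) : Type) ⧸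
          (I • ⊤ : Submodule A ((LinearMap.ker S.g.hom ⧸ LinearMap.range S.moduleCatToCycles) : Type))) :=
        moduleLength_eq_of_equiv (TensorProduct.tensorQuotEquivQuotSMul _ I)
    _ ≤ moduleLength A ((LinearMap.ker S'.g.hom ⧸ LinearMap.range S'.moduleCatToCycles) : Type) := moduleLength_le_of_injective φ hφ
    _ = moduleLength A ((tensorQuotComplex A x C).homology i) :=
        (moduleLength_eq_of_equiv e2).symm
end

section
/- Let K be a field of characteristic p > 0, n ≥ 1, q = p^n, and let S = K[X,Y,U,V]/(X^q, Y^q, U^q, V^q). Suppose λ_0, ..., λ_{q-1} ∈ K satisfy Σ_{i=0}^{q-1} λ_i x^{q-1} y^i u^{q-1-i} ∈ (xy − uv)·S, where x, y, u, v denote the images of X, Y, U, V in S. Then λ_i = 0 for all i. -/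
open MvPolynomial

/-- `S = K[X,Y,U,V]/(X^q, Y^q, U^q, V^q)`. -/
noncomputable abbrev truncRing (K : Type) [Field K] (q : ℕ) : Type :=
  MvPolynomial (Fin 4) K ⧸
    Ideal.span {(X 0 : MvPolynomial (Fin 4) K) ^ q, (X 1) ^ q, (X 2) ^ q, (X 3) ^ q}

section Aux

variable {K : Type} [Field K]

/-- Every monomial occurring in an element of the monomial ideal
`(a^q b^q, c^q d^q, a^q d^q, c^q b^q)` is divisible by one of the four generators. -/
lemma aux_J_coeff (q : ℕ) (f : MvPolynomial (Fin 4) K)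
    (hf : f ∈ Ideal.span {(X 0 : MvPolynomial (Fin 4) K) ^ q * X 1 ^ q,
        X 2 ^ q * X 3 ^ q, X 0 ^ q * X 3 ^ q, X 2 ^ q * X 1 ^ q})
    (mm : Fin 4 →₀ ℕ) (h : coeff mm f ≠ 0) :
    Finsupp.single 0 q + Finsupp.single 1 q ≤ mm ∨
    Finsupp.single 2 q + Finsupp.single 3 q ≤ mm ∨
    Finsupp.single 0 q + Finsupp.single 3 q ≤ mm ∨
    Finsupp.single 2 q + Finsupp.single 1 q ≤ mm := by
  induction hf using Submodule.span_induction generalizing mm with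
  | mem g hg =>
      simp only [Set.mem_insert_iff, Set.mem_singleton_iff] at hg
      rcases hg with rfl | rfl | rfl | rfl <;>
      · rw [X_pow_eq_monomial, X_pow_eq_monomial, monomial_mul, one_mul,
          coeff_monomial] at h
        split_ifs at h with hh
        · subst hh; simp [le_refl]
        · exact absurd rfl h
  | zero => simp at h
  | add a b ha hb iha ihb =>
      rw [coeff_add] at h
      rcases (by by_contra hc; push_neg at hc; rw [hc.1, hc.2, add_zero] at h; exact h rfl :
        coeff mm a ≠ 0 ∨ coeff mm b ≠ 0) with h' | h'
      · exact iha mm h'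
      · exact ihb mm h'
  | smul r g hg ih =>
      rw [smul_eq_mul, coeff_mul] at h
      obtain ⟨⟨m1, m2⟩, hmem, hne⟩ := Finset.exists_ne_zero_of_sum_ne_zero h
      have h2 : coeff m2 g ≠ 0 := right_ne_zero_of_mul hne
      have hle : m2 ≤ mm := by
        rw [Finset.HasAntidiagonal.mem_antidiagonal] at hmem
        exact hmem ▸ le_add_self
      rcases ih m2 h2 with h' | h' | h' | h' <;>
        [exact Or.inl (h'.trans hle); exact Or.inr (Or.inl (h'.trans hle));
         exact Or.inr (Or.inr (Or.inl (h'.trans hle)));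
         exact Or.inr (Or.inr (Or.inr (h'.trans hle)))]

/-- The Segre substitution `x ↦ ab, y ↦ cd, u ↦ ad, v ↦ cb`. -/
noncomputable def segre : MvPolynomial (Fin 4) K →ₐ[K] MvPolynomial (Fin 4) K :=
  aeval ![(X 0 : MvPolynomial (Fin 4) K) * X 1, X 2 * X 3, X 0 * X 3, X 2 * X 1]

lemma segre_X0 : segre (K := K) (X 0) = X 0 * X 1 := by rw [segre, aeval_X]; rfl
lemma segre_X1 : segre (K := K) (X 1) = X 2 * X 3 := by rw [segre, aeval_X]; rfl
lemma segre_X2 : segre (K := K) (X 2) = X 0 * X 3 := by rw [segre, aeval_X]; rfl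
lemma segre_X3 : segre (K := K) (X 3) = X 2 * X 1 := by rw [segre, aeval_X]; rfl

lemma segre_rel : segre (K := K) (X 0 * X 1 - X 2 * X 3) = 0 := by
  rw [map_sub, map_mul, map_mul, segre_X0, segre_X1, segre_X2, segre_X3]; ring

/-- The Segre substitution maps the ideal `(x^q, y^q, u^q, v^q)` into the monomial ideal. -/
lemma segre_gen (q : ℕ) (f : MvPolynomial (Fin 4) K)
    (hf : f ∈ Ideal.span {(X 0 : MvPolynomial (Fin 4) K) ^ q, (X 1) ^ q, (X 2) ^ q, (X 3) ^ q}) :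
    segre f ∈ Ideal.span {(X 0 : MvPolynomial (Fin 4) K) ^ q * X 1 ^ q,
      X 2 ^ q * X 3 ^ q, X 0 ^ q * X 3 ^ q, X 2 ^ q * X 1 ^ q} := by
  have hmap : Ideal.map (segre (K := K) :
      MvPolynomial (Fin 4) K →+* MvPolynomial (Fin 4) K)
      (Ideal.span {(X 0 : MvPolynomial (Fin 4) K) ^ q, (X 1) ^ q, (X 2) ^ q, (X 3) ^ q}) ≤
      Ideal.span {(X 0 : MvPolynomial (Fin 4) K) ^ q * X 1 ^ q,
        X 2 ^ q * X 3 ^ q, X 0 ^ q * X 3 ^ q, X 2 ^ q * X 1 ^ q} := by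
    rw [Ideal.map_span]
    apply Ideal.span_le.2
    rintro _ ⟨g, hg, rfl⟩
    simp only [Set.mem_insert_iff, Set.mem_singleton_iff] at hg
    rcases hg with rfl | rfl | rfl | rfl
    · rw [RingHom.coe_coe, map_pow, segre_X0, mul_pow]
      exact Ideal.subset_span (Or.inl rfl)
    · rw [RingHom.coe_coe, map_pow, segre_X1, mul_pow]
      exact Ideal.subset_span (Or.inr (Or.inl rfl))
    · rw [RingHom.coe_coe, map_pow, segre_X2, mul_pow]
      exact Ideal.subset_span (Or.inr (Or.inr (Or.inl rfl)))
    · rw [RingHom.coe_coe, map_pow, segre_X3, mul_pow]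
      exact Ideal.subset_span (Or.inr (Or.inr (Or.inr rfl)))
  exact hmap (Ideal.mem_map_of_mem _ hf)

/-- Exponent vector of the image of `x^{q-1} y^j u^{q-1-j}` under the Segre substitution. -/
noncomputable def mexp (q j : ℕ) : Fin 4 →₀ ℕ :=
  Finsupp.single 0 ((q-1) + (q-1-j)) + Finsupp.single 1 (q-1) +
  Finsupp.single 2 j + Finsupp.single 3 (q-1)

lemma aux_image_term (q j : ℕ) (hj : j ≤ q - 1) :
    segre ((X 0 : MvPolynomial (Fin 4) K) ^ (q-1) * X 1 ^ j * X 2 ^ (q-1-j)) =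
      monomial (mexp q j) 1 := by
  rw [map_mul, map_mul, map_pow, map_pow, map_pow, segre_X0, segre_X1, segre_X2]
  rw [mul_pow, mul_pow, mul_pow]
  have hre : (X 0 ^ (q-1) * X 1 ^ (q-1)) * ((X 2 : MvPolynomial (Fin 4) K) ^ j * X 3 ^ j)
      * (X 0 ^ (q-1-j) * X 3 ^ (q-1-j))
      = (X 0 ^ (q-1) * X 0 ^ (q-1-j)) * X 1 ^ (q-1) * X 2 ^ j * (X 3 ^ j * X 3 ^ (q-1-j)) := by
    ring
  rw [hre, ← pow_add, ← pow_add, Nat.add_sub_cancel' hj]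
  rw [X_pow_eq_monomial, X_pow_eq_monomial, X_pow_eq_monomial, X_pow_eq_monomial,
    monomial_mul, monomial_mul, monomial_mul, one_mul, one_mul, one_mul]
  rfl

lemma aux_mexp_apply (q j : ℕ) :
    mexp q j 1 = q - 1 ∧ mexp q j 2 = j ∧ mexp q j 3 = q - 1 := by
  refine ⟨?_, ?_, ?_⟩ <;>
    simp [mexp, Finsupp.add_apply, Finsupp.single_apply]

end Aux

/-- If `λ_0, ..., λ_{q-1} ∈ K` satisfy `Σ λ_i x^{q-1} y^i u^{q-1-i} ∈ (xy - uv)·S` in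
`S = K[X,Y,U,V]/(X^q, Y^q, U^q, V^q)` with `q = p^n`, then all `λ_i = 0`. -/
theorem coeffs_vanish_of_mem_span
    (K : Type) [Field K] (p : ℕ) [CharP K p] (hp : 0 < p) (n : ℕ) (hn : 1 ≤ n)
    (q : ℕ) (hq : q = p ^ n)
    (x y u v : truncRing K q)
    (hx : x = Ideal.Quotient.mk _ (X 0)) (hy : y = Ideal.Quotient.mk _ (X 1))
    (hu : u = Ideal.Quotient.mk _ (X 2)) (hv : v = Ideal.Quotient.mk _ (X 3))
    (lam : Fin q → K)
    (hmem : (∑ i : Fin q, lam i • (x ^ (q - 1) * y ^ (i : ℕ) * u ^ (q - 1 - (i : ℕ)))) ∈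
      Ideal.span {x * y - u * v}) :
    ∀ i, lam i = 0 := by
  have hq1 : 1 ≤ q := by subst hq; exact Nat.one_le_pow _ _ hp
  clear hq hn
  subst hx hy hu hv
  classical
  set I : Ideal (MvPolynomial (Fin 4) K) :=
    Ideal.span {(X 0 : MvPolynomial (Fin 4) K) ^ q, (X 1) ^ q, (X 2) ^ q, (X 3) ^ q} with hI
  -- lift the hypothesis to a polynomial identity
  rw [Ideal.mem_span_singleton] at hmem
  obtain ⟨c, hc⟩ := hmem
  obtain ⟨G, rfl⟩ := Ideal.Quotient.mk_surjective c
  set P0 : MvPolynomial (Fin 4) K :=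
    ∑ i : Fin q, lam i • ((X 0) ^ (q-1) * (X 1) ^ (i : ℕ) * (X 2) ^ (q-1-(i : ℕ))) with hP0
  have hmk : Ideal.Quotient.mk I P0 =
      ∑ i : Fin q, lam i • ((Ideal.Quotient.mk I (X 0)) ^ (q-1) *
        (Ideal.Quotient.mk I (X 1)) ^ (i : ℕ) * (Ideal.Quotient.mk I (X 2)) ^ (q-1-(i : ℕ))) := by
    rw [hP0, ← Ideal.Quotient.mkₐ_eq_mk K, map_sum]
    simp [map_smul, map_mul, map_pow]
  have hPI : P0 - (X 0 * X 1 - X 2 * X 3) * G ∈ I := by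
    rw [← Ideal.Quotient.eq_zero_iff_mem, map_sub, sub_eq_zero, hmk, hc]
    push_cast [map_mul, map_sub]
    ring
  -- map by the Segre substitution
  have hψP0 : segre (K := K) P0 ∈ Ideal.span {(X 0 : MvPolynomial (Fin 4) K) ^ q * X 1 ^ q,
      X 2 ^ q * X 3 ^ q, X 0 ^ q * X 3 ^ q, X 2 ^ q * X 1 ^ q} := by
    have heq : segre (K := K) P0 = segre (P0 - (X 0 * X 1 - X 2 * X 3) * G) := by
      rw [map_sub, map_mul, segre_rel, zero_mul, sub_zero]
    rw [heq]
    exact segre_gen q _ hPI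
  -- compute the image as a sum of distinct monomials
  have hψP0eq : segre (K := K) P0 = ∑ j : Fin q, lam j • monomial (mexp q (j : ℕ)) (1 : K) := by
    rw [hP0, map_sum]
    refine Finset.sum_congr rfl fun j _ => ?_
    rw [map_smul, aux_image_term q (j : ℕ) (Nat.le_pred_of_lt j.isLt)]
  -- extract coefficients
  intro i
  have hcoeff : coeff (mexp q (i : ℕ)) (segre (K := K) P0) = lam i := by
    rw [hψP0eq, coeff_sum]
    rw [Finset.sum_eq_single i]
    · rw [coeff_smul, coeff_monomial, if_pos rfl, smul_eq_mul, mul_one]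
    · intro j _ hji
      rw [coeff_smul, coeff_monomial, if_neg, smul_eq_mul, mul_zero]
      intro hmexp
      apply hji
      have h2 := congrArg (fun f : Fin 4 →₀ ℕ => f 2) hmexp
      rw [(aux_mexp_apply q (j : ℕ)).2.1, (aux_mexp_apply q (i : ℕ)).2.1] at h2
      exact Fin.ext h2
    · intro hni
      exact absurd (Finset.mem_univ i) hni
  by_contra hne
  have hne' : coeff (mexp q (i : ℕ)) (segre (K := K) P0) ≠ 0 := by rw [hcoeff]; exact hne
  have hdisj := aux_J_coeff q _ hψP0 (mexp q (i : ℕ)) hne'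
  have hlt : q - 1 < q := Nat.sub_lt hq1 one_pos
  rcases hdisj with h' | h' | h' | h'
  · have := h' 1
    rw [Finsupp.add_apply, (aux_mexp_apply q (i : ℕ)).1] at this
    simp [Finsupp.single_apply] at this
    omega
  · have := h' 3
    rw [Finsupp.add_apply, (aux_mexp_apply q (i : ℕ)).2.2] at this
    simp [Finsupp.single_apply] at this
    omega
  · have := h' 3
    rw [Finsupp.add_apply, (aux_mexp_apply q (i : ℕ)).2.2] at this
    simp [Finsupp.single_apply] at this
    omega
  · have := h' 1
    rw [Finsupp.add_apply, (aux_mexp_apply q (i : ℕ)).1] at this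
    simp [Finsupp.single_apply] at this
    omega
end
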